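/- Let γ be holomorphic with ω := γ' − (1/2)γ², and suppose x(τ) is holomorphic with ẋ ≠ 0 satisfying [x,τ] = Q(x) and ẍ/ẋ = γ + R(x)ẋ for a holomorphic function R. Then ω = (Q(x) − R'(x) − (1/2)R(x)²)·ẋ², and with Q̃ := Q − R' − (1/2)R², ∇̃f := ḟ − kγf on weight-k objects, one has ∇̃ω = (Q̃' + 2RQ̃)(x)·ẋ³ and ∇̃²ω = (Q̃'' + 5RQ̃' + 2R'Q̃ + 6R²Q̃)(x)·ẋ⁴. -/

import Mathlib

lemma myAnalyticAt.deriv {f : ℂ → ℂ} {z : ℂ} (h : AnalyticAt ℂ f z) :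
    AnalyticAt ℂ (deriv f) z := by
  obtain ⟨s, hs, hf⟩ := h.exists_mem_nhds_analyticOnNhd
  exact hf.deriv z (mem_of_mem_nhds hs)

/-- The meromorphic derivative [x,τ] = x⃛/ẋ³ − (3/2)ẍ²/ẋ⁴. -/
noncomputable def merD (x : ℂ → ℂ) (τ : ℂ) : ℂ :=
  iteratedDeriv 3 x τ / (deriv x τ) ^ 3
    - (3 / 2) * (iteratedDeriv 2 x τ) ^ 2 / (deriv x τ) ^ 4

/-- For a renormalized connection γ = Γ − R(x)ẋ (i.e. ẍ/ẋ = γ + R(x)ẋ) with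
ω = γ' − γ²/2 and Q̃ = Q − R' − R²/2, one has ω = Q̃(x)ẋ²,
∇̃ω = (Q̃' + 2RQ̃)(x)ẋ³ and ∇̃²ω = (Q̃'' + 5RQ̃' + 2R'Q̃ + 6R²Q̃)(x)ẋ⁴. -/
theorem renormalized_connection_identities (U : Set ℂ) (hU : IsOpen U)
    (x γ ω R Q Qt : ℂ → ℂ)
    (hx : ∀ τ ∈ U, AnalyticAt ℂ x τ)
    (hγa : ∀ τ ∈ U, AnalyticAt ℂ γ τ)
    (hRa : ∀ τ ∈ U, AnalyticAt ℂ R (x τ))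
    (hQa : ∀ τ ∈ U, AnalyticAt ℂ Q (x τ))
    (hx' : ∀ τ ∈ U, deriv x τ ≠ 0)
    (hmerD : ∀ τ ∈ U, merD x τ = Q (x τ))
    (hγ : ∀ τ ∈ U, deriv (deriv x) τ = (γ τ + R (x τ) * deriv x τ) * deriv x τ)
    (hωdef : ∀ τ, ω τ = deriv γ τ - (1 / 2) * (γ τ) ^ 2)
    (hQt : ∀ u : ℂ, Qt u = Q u - deriv R u - (1 / 2) * (R u) ^ 2) :
    ∀ τ ∈ U,
      (ω τ = Qt (x τ) * (deriv x τ) ^ 2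
        ∧ deriv ω τ - 2 * γ τ * ω τ
            = (deriv Qt (x τ) + 2 * R (x τ) * Qt (x τ)) * (deriv x τ) ^ 3
        ∧ deriv (fun t => deriv ω t - 2 * γ t * ω t) τ
              - 3 * γ τ * (deriv ω τ - 2 * γ τ * ω τ)
            = (deriv (deriv Qt) (x τ) + 5 * R (x τ) * deriv Qt (x τ)
                + 2 * deriv R (x τ) * Qt (x τ)
                + 6 * (R (x τ)) ^ 2 * Qt (x τ)) * (deriv x τ) ^ 4) := by
  have hQtfun : Qt = fun u => Q u - deriv R u - (1 / 2) * (R u) ^ 2 := funext hQt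
  have hQtA : ∀ τ ∈ U, AnalyticAt ℂ Qt (x τ) := by
    intro τ hτ
    rw [hQtfun]
    exact ((hQa τ hτ).sub (myAnalyticAt.deriv (hRa τ hτ))).sub
      (analyticAt_const.mul ((hRa τ hτ).pow 2))
  -- derivative of x at a point of U
  have hxd : ∀ τ ∈ U, HasDerivAt x (deriv x τ) τ :=
    fun τ hτ => (hx τ hτ).differentiableAt.hasDerivAt
  -- composition helper
  have comp : ∀ (f : ℂ → ℂ), ∀ τ ∈ U, AnalyticAt ℂ f (x τ) →
      HasDerivAt (fun t => f (x t)) (deriv f (x τ) * deriv x τ) τ := by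
    intro f τ hτ hf
    exact (hf.differentiableAt.hasDerivAt).comp τ (hxd τ hτ)
  -- derivative of deriv x
  have hx2 : ∀ τ ∈ U, HasDerivAt (deriv x)
      ((γ τ + R (x τ) * deriv x τ) * deriv x τ) τ := by
    intro τ hτ
    have := (myAnalyticAt.deriv (hx τ hτ)).differentiableAt.hasDerivAt
    rwa [hγ τ hτ] at this
  -- derivative of γ
  have hγd : ∀ τ ∈ U, HasDerivAt γ (ω τ + (1 / 2) * (γ τ) ^ 2) τ := by
    intro τ hτ
    have h := (hγa τ hτ).differentiableAt.hasDerivAt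
    have : ω τ + (1 / 2) * (γ τ) ^ 2 = deriv γ τ := by rw [hωdef τ]; ring
    rwa [this]
  -- Part 1, for all points of U
  have part1 : ∀ τ ∈ U, ω τ = Qt (x τ) * (deriv x τ) ^ 2 := by
    intro τ hτ
    have hRx := comp R τ hτ (hRa τ hτ)
    have hg : HasDerivAt (fun t => (γ t + R (x t) * deriv x t) * deriv x t)
        (((ω τ + (1 / 2) * (γ τ) ^ 2) +
            (deriv R (x τ) * deriv x τ * deriv x τ +
              R (x τ) * ((γ τ + R (x τ) * deriv x τ) * deriv x τ))) * deriv x τ +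
          (γ τ + R (x τ) * deriv x τ) * ((γ τ + R (x τ) * deriv x τ) * deriv x τ)) τ :=
      ((hγd τ hτ).add ((hRx).mul (hx2 τ hτ))).mul (hx2 τ hτ)
    have h3 : iteratedDeriv 3 x τ
        = ((ω τ + (1 / 2) * (γ τ) ^ 2) +
            (deriv R (x τ) * deriv x τ * deriv x τ +
              R (x τ) * ((γ τ + R (x τ) * deriv x τ) * deriv x τ))) * deriv x τ +
          (γ τ + R (x τ) * deriv x τ) * ((γ τ + R (x τ) * deriv x τ) * deriv x τ) := by
      have e : deriv (deriv x) =ᶠ[nhds τ]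
          fun t => (γ t + R (x t) * deriv x t) * deriv x t :=
        Filter.eventuallyEq_of_mem (hU.mem_nhds hτ) (fun t ht => hγ t ht)
      have : iteratedDeriv 3 x τ = deriv (deriv (deriv x)) τ := by
        simp [iteratedDeriv_succ, iteratedDeriv_zero]
      rw [this, e.deriv_eq, hg.deriv]
    have h2 : iteratedDeriv 2 x τ = (γ τ + R (x τ) * deriv x τ) * deriv x τ := by
      have : iteratedDeriv 2 x τ = deriv (deriv x) τ := by
        simp [iteratedDeriv_succ, iteratedDeriv_zero]
      rw [this, hγ τ hτ]
    have key := hmerD τ hτ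
    rw [merD, h3, h2] at key
    have ha := hx' τ hτ
    rw [hQt (x τ)]
    field_simp at key
    have h4 : (4 : ℂ) * (deriv x τ) ^ 5 ≠ 0 := by
      exact mul_ne_zero (by norm_num) (pow_ne_zero 5 ha)
    refine mul_left_cancel₀ h4 ?_
    linear_combination (2 * deriv x τ ^ 5) * key
  refine fun τ hτ => ⟨part1 τ hτ, ?_, ?_⟩
  · -- Part 2
    have e1 : ω =ᶠ[nhds τ] fun t => Qt (x t) * (deriv x t) ^ 2 :=
      Filter.eventuallyEq_of_mem (hU.mem_nhds hτ) (fun t ht => part1 t ht)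
    have hf : HasDerivAt (fun t => Qt (x t) * (deriv x t) ^ 2)
        (deriv Qt (x τ) * deriv x τ * (deriv x τ) ^ 2 +
          Qt (x τ) * (2 * (deriv x τ) ^ 1 *
            ((γ τ + R (x τ) * deriv x τ) * deriv x τ))) τ :=
      (comp Qt τ hτ (hQtA τ hτ)).mul ((hx2 τ hτ).pow 2)
    rw [e1.deriv_eq, hf.deriv, part1 τ hτ]
    ring
  · -- first establish part 2 on all of U
    have part2 : ∀ t ∈ U, deriv ω t - 2 * γ t * ω t
        = (deriv Qt (x t) + 2 * R (x t) * Qt (x t)) * (deriv x t) ^ 3 := by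
      intro t ht
      have e1 : ω =ᶠ[nhds t] fun s => Qt (x s) * (deriv x s) ^ 2 :=
        Filter.eventuallyEq_of_mem (hU.mem_nhds ht) (fun s hs => part1 s hs)
      have hf : HasDerivAt (fun s => Qt (x s) * (deriv x s) ^ 2)
          (deriv Qt (x t) * deriv x t * (deriv x t) ^ 2 +
            Qt (x t) * (2 * (deriv x t) ^ 1 *
              ((γ t + R (x t) * deriv x t) * deriv x t))) t :=
        (comp Qt t ht (hQtA t ht)).mul ((hx2 t ht).pow 2)
      rw [e1.deriv_eq, hf.deriv, part1 t ht]
      ring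
    have e2 : (fun t => deriv ω t - 2 * γ t * ω t) =ᶠ[nhds τ]
        fun t => (deriv Qt (x t) + 2 * R (x t) * Qt (x t)) * (deriv x t) ^ 3 :=
      Filter.eventuallyEq_of_mem (hU.mem_nhds hτ) (fun t ht => part2 t ht)
    have hA := comp (deriv Qt) τ hτ (myAnalyticAt.deriv (hQtA τ hτ))
    have hB := comp R τ hτ (hRa τ hτ)
    have hC := comp Qt τ hτ (hQtA τ hτ)
    have hP := (hx2 τ hτ).pow 3
    have hF := (hA.add ((hB.const_mul 2).mul hC)).mul hP
    rw [e2.deriv_eq, show (fun t => (deriv Qt (x t) + 2 * R (x t) * Qt (x t)) * deriv x t ^ 3) = (((fun t => deriv Qt (x t)) + (fun y => 2 * R (x y)) * fun t => Qt (x t)) * deriv x ^ 3) from rfl, hF.deriv, part2 τ hτ]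
    simp only [Pi.add_apply, Pi.mul_apply, Pi.pow_apply]
    push_cast
    ring
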